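/- Let V₁,...,V_n be independent nonnegative random variables, σ a uniform random permutation independent of the values, ∞ = τ₀ ≥ τ₁ ≥ ... ≥ τ_n ≥ τ_{n+1} = -∞ nonincreasing thresholds, and T = min{i : V_{σ(i)} > τ_i}. Then for every j ∈ [n+1] and every t ∈ [τ_j, τ_{j-1}), P(V_{σ(T)} > t) = P(T ≤ j-1) + Σ_{i∈[n]} P(V_i > t) · (1/n) · Σ_{k=j}^{n} P(T ≥ k | σ(k) = i). -/

import Mathlib

open MeasureTheory ProbabilityTheory

/-- Stopping time of the time-threshold algorithm (1-based time): the first time `k ∈ [1,n]`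
at which the revealed value `V_{σ(k)}` strictly exceeds the threshold `τ k`, and `n+1`
(meaning "never stops") if no such time exists. -/
noncomputable def stopT {Ω : Type*} {n : ℕ} (V : Fin n → Ω → ℝ) (τ : ℕ → ℝ)
    (σ : Ω → Equiv.Perm (Fin n)) (ω : Ω) : ℕ :=
  sInf ({k : ℕ | ∃ j : Fin n, (j : ℕ) + 1 = k ∧ τ k < V (σ ω j) ω} ∪ {n + 1})

section Aux

variable {Ω : Type*} {n : ℕ} (V : Fin n → Ω → ℝ) (τ : ℕ → ℝ) (σ : Ω → Equiv.Perm (Fin n))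

lemma stopT_le (ω : Ω) : stopT V τ σ ω ≤ n + 1 :=
  Nat.sInf_le (Or.inr rfl)

lemma one_le_stopT (ω : Ω) : 1 ≤ stopT V τ σ ω := by
  have h := Nat.sInf_mem (s := {k : ℕ | ∃ j : Fin n, (j : ℕ) + 1 = k ∧ τ k < V (σ ω j) ω} ∪ {n + 1}) ⟨n + 1, Or.inr rfl⟩
  change stopT V τ σ ω ∈ _ at h
  rcases h with ⟨m, hm, _⟩ | h
  · omega
  · simp only [Set.mem_singleton_iff] at h
    omega

lemma le_stopT_iff {k : ℕ} (hk : k ≤ n + 1) (ω : Ω) :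
    k ≤ stopT V τ σ ω ↔ ∀ m : Fin n, (m : ℕ) + 1 < k → V (σ ω m) ω ≤ τ ((m : ℕ) + 1) := by
  constructor
  · intro h m hm
    by_contra hlt
    push_neg at hlt
    have h2 : stopT V τ σ ω ≤ (m : ℕ) + 1 := Nat.sInf_le (Or.inl ⟨m, rfl, hlt⟩)
    omega
  · intro h
    refine le_csInf ⟨n + 1, Or.inr rfl⟩ ?_
    rintro x (⟨m, rfl, hlt⟩ | hx)
    · by_contra hxk
      push_neg at hxk
      exact absurd (h m hxk) (not_le.mpr hlt)
    · simp only [Set.mem_singleton_iff] at hx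
      omega

lemma stopT_spec {k : ℕ} (ω : Ω) (hk : stopT V τ σ ω = k) (hkn : k ≤ n) :
    ∃ m : Fin n, (m : ℕ) + 1 = k ∧ τ k < V (σ ω m) ω := by
  have h := Nat.sInf_mem (s := {k : ℕ | ∃ j : Fin n, (j : ℕ) + 1 = k ∧ τ k < V (σ ω j) ω} ∪ {n + 1}) ⟨n + 1, Or.inr rfl⟩
  change stopT V τ σ ω ∈ _ at h
  rw [hk] at h
  rcases h with h | h
  · exact h
  · simp only [Set.mem_singleton_iff] at h
    omega

lemma tau_mono (hτ : ∀ k, 1 ≤ k → k < n → τ (k + 1) ≤ τ k) :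
    ∀ a b : ℕ, 1 ≤ a → a ≤ b → b ≤ n → τ b ≤ τ a := by
  intro a b ha hab hbn
  induction b with
  | zero => omega
  | succ b ih =>
    rcases Nat.eq_or_lt_of_le hab with h | h
    · rw [h]
    · calc τ (b + 1) ≤ τ b := hτ b (by omega) (by omega)
        _ ≤ τ a := ih (by omega) (by omega)

end Aux

section Meas

variable {Ω : Type*} [MeasurableSpace Ω] {n : ℕ}
  (V : Fin n → Ω → ℝ) (τ : ℕ → ℝ) (σ : Ω → Equiv.Perm (Fin n))

lemma measurable_ge_stopT (hVmeas : ∀ i, Measurable (V i))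
    (hσmeas : ∀ π, MeasurableSet {ω | σ ω = π}) {k : ℕ} (hk : k ≤ n + 1) :
    MeasurableSet {ω | k ≤ stopT V τ σ ω} := by
  have hset : {ω | k ≤ stopT V τ σ ω} =
      ⋃ π : Equiv.Perm (Fin n), ({ω | σ ω = π} ∩
        ⋂ m : Fin n, {ω | (m : ℕ) + 1 < k → V (π m) ω ≤ τ ((m : ℕ) + 1)}) := by
    ext ω
    simp only [Set.mem_iUnion, Set.mem_inter_iff, Set.mem_iInter, Set.mem_setOf_eq]
    constructor
    · intro h
      exact ⟨σ ω, rfl, fun m hm => (le_stopT_iff V τ σ hk ω).mp h m hm⟩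
    · rintro ⟨π, hπ, h⟩
      rw [le_stopT_iff V τ σ hk ω]
      intro m hm
      rw [hπ]
      exact h m hm
  rw [hset]
  refine MeasurableSet.iUnion fun π => (hσmeas π).inter (MeasurableSet.iInter fun m => ?_)
  by_cases hm : (m : ℕ) + 1 < k
  · simp only [hm, true_implies]
    exact measurableSet_le (hVmeas _) measurable_const
  · simp only [hm, false_implies, Set.setOf_true]
    exact MeasurableSet.univ

lemma measurable_perm_eq (hσmeas : ∀ π, MeasurableSet {ω | σ ω = π}) (m0 : Fin n) (i : Fin n) :
    MeasurableSet {ω | σ ω m0 = i} := by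
  have hset : {ω | σ ω m0 = i} =
      ⋃ π ∈ {π : Equiv.Perm (Fin n) | π m0 = i}, {ω | σ ω = π} := by
    ext ω
    simp only [Set.mem_iUnion, Set.mem_setOf_eq, exists_prop]
    exact ⟨fun h => ⟨σ ω, h, rfl⟩, fun ⟨π, hπ, h⟩ => by rw [h]; exact hπ⟩
  rw [hset]
  exact MeasurableSet.biUnion (Set.to_countable _) fun π _ => hσmeas π

lemma sum_perm (μ : Measure Ω) (X : Set Ω) (hX : MeasurableSet X)
    (hσmeas : ∀ π, MeasurableSet {ω | σ ω = π}) :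
    μ X = ∑ π : Equiv.Perm (Fin n), μ ({ω | σ ω = π} ∩ X) := by
  have hset : X = ⋃ π ∈ (Finset.univ : Finset (Equiv.Perm (Fin n))), ({ω | σ ω = π} ∩ X) := by
    ext ω
    simp only [Set.mem_iUnion, Finset.mem_univ, Set.mem_inter_iff, Set.mem_setOf_eq,
      exists_prop, true_and]
    exact ⟨fun h => ⟨σ ω, rfl, h⟩, fun ⟨π, _, h⟩ => h⟩
  conv_lhs => rw [hset]
  rw [measure_biUnion_finset ?_ fun π _ => (hσmeas π).inter hX]
  intro π _ π' _ hne
  refine Set.disjoint_left.mpr ?_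
  rintro ω ⟨h1, -⟩ ⟨h2, -⟩
  exact hne (h1 ▸ h2 ▸ rfl)

end Meas

lemma card_fiber_eq {n : ℕ} (m0 i i' : Fin n) :
    (Finset.univ.filter fun π : Equiv.Perm (Fin n) => π m0 = i).card
      = (Finset.univ.filter fun π : Equiv.Perm (Fin n) => π m0 = i').card := by
  refine Finset.card_nbij' (fun π => π.trans (Equiv.swap i i'))
    (fun π => π.trans (Equiv.swap i i')) ?_ ?_ ?_ ?_
  · intro π hπ
    simp only [Finset.mem_filter, Finset.mem_univ, true_and] at *
    simp_all [Equiv.trans_apply]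
  · intro π hπ
    simp only [Finset.mem_filter, Finset.mem_univ, true_and] at *
    simp_all [Equiv.trans_apply]
  · intro π hπ
    ext x
    simp [Equiv.trans_apply, Equiv.swap_apply_self]
  · intro π hπ
    ext x
    simp [Equiv.trans_apply, Equiv.swap_apply_self]

section Marg

variable {Ω : Type*} [MeasurableSpace Ω] {n : ℕ} (σ : Ω → Equiv.Perm (Fin n))

lemma perm_marginal (μ : Measure Ω) [IsProbabilityMeasure μ] (hn : 0 < n)
    (hσmeas : ∀ π, MeasurableSet {ω | σ ω = π})
    (hσunif : ∀ π, μ {ω | σ ω = π} = ((n.factorial : ENNReal))⁻¹)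
    (m0 : Fin n) (i : Fin n) :
    μ {ω | σ ω m0 = i} = (n : ENNReal)⁻¹ := by
  have hDval : ∀ i' : Fin n, μ {ω | σ ω m0 = i'} =
      ((Finset.univ.filter fun π : Equiv.Perm (Fin n) => π m0 = i').card : ENNReal)
        * ((n.factorial : ENNReal))⁻¹ := by
    intro i'
    rw [sum_perm σ μ _ (measurable_perm_eq σ hσmeas m0 i') hσmeas]
    have hterm : ∀ π : Equiv.Perm (Fin n), μ ({ω | σ ω = π} ∩ {ω | σ ω m0 = i'})
        = if π m0 = i' then ((n.factorial : ENNReal))⁻¹ else 0 := by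
      intro π
      by_cases hπ : π m0 = i'
      · rw [if_pos hπ, show {ω | σ ω = π} ∩ {ω | σ ω m0 = i'} = {ω | σ ω = π} from ?_,
          hσunif π]
        ext ω
        simp only [Set.mem_inter_iff, Set.mem_setOf_eq]
        exact ⟨fun h => h.1, fun h => ⟨h, by rw [h]; exact hπ⟩⟩
      · rw [if_neg hπ, show {ω | σ ω = π} ∩ {ω | σ ω m0 = i'} = ∅ from ?_, measure_empty]
        ext ω
        simp only [Set.mem_inter_iff, Set.mem_setOf_eq, Set.mem_empty_iff_false, iff_false,
          not_and]
        intro h hi'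
        exact hπ (by rw [← h]; exact hi')
    simp_rw [hterm]
    rw [← Finset.sum_filter, Finset.sum_const, nsmul_eq_mul]
  have htot : ∑ i' : Fin n, μ {ω | σ ω m0 = i'} = 1 := by
    have hset : (Set.univ : Set Ω) = ⋃ i' ∈ (Finset.univ : Finset (Fin n)), {ω | σ ω m0 = i'} := by
      ext ω
      simp only [Set.mem_univ, Set.mem_iUnion, Finset.mem_univ, Set.mem_setOf_eq, exists_prop,
        true_and, true_iff]
      exact ⟨σ ω m0, rfl⟩
    have h1 : μ (Set.univ : Set Ω) = 1 := measure_univ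
    rw [hset, measure_biUnion_finset ?_ fun i' _ => measurable_perm_eq σ hσmeas m0 i'] at h1
    · exact h1
    · intro a _ b _ hab
      refine Set.disjoint_left.mpr ?_
      rintro ω h1 h2
      exact hab (by rw [← h1, ← h2])
  have hsame : ∀ i' : Fin n, μ {ω | σ ω m0 = i'} = μ {ω | σ ω m0 = i} := by
    intro i'
    rw [hDval i', hDval i, card_fiber_eq m0 i' i]
  have hmul : (n : ENNReal) * μ {ω | σ ω m0 = i} = 1 := by
    rw [← htot, Finset.sum_congr rfl fun i' _ => hsame i', Finset.sum_const,
      Finset.card_univ, Fintype.card_fin, nsmul_eq_mul]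
  have hn0 : (n : ENNReal) ≠ 0 := by
    simp only [ne_eq, Nat.cast_eq_zero]
    omega
  have hntop : (n : ENNReal) ≠ ⊤ := ENNReal.natCast_ne_top n
  calc μ {ω | σ ω m0 = i} = (n : ENNReal)⁻¹ * ((n : ENNReal) * μ {ω | σ ω m0 = i}) := by
        rw [← mul_assoc, ENNReal.inv_mul_cancel hn0 hntop, one_mul]
    _ = (n : ENNReal)⁻¹ := by rw [hmul, mul_one]

end Marg

section Key

variable {Ω : Type*} [MeasurableSpace Ω] {n : ℕ}
  (V : Fin n → Ω → ℝ) (τ : ℕ → ℝ) (σ : Ω → Equiv.Perm (Fin n))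

lemma key_indep (μ : Measure Ω) [IsProbabilityMeasure μ]
    (hVmeas : ∀ i, Measurable (V i))
    (hVindep : iIndepFun V μ)
    (hindep : ∀ (π : Equiv.Perm (Fin n)) (A : Set (Fin n → ℝ)), MeasurableSet A →
      μ ({ω | σ ω = π} ∩ {ω | (fun i => V i ω) ∈ A})
        = μ {ω | σ ω = π} * μ {ω | (fun i => V i ω) ∈ A})
    (t : ℝ) {k : ℕ} (hk1 : 1 ≤ k) (hkn : k ≤ n) (i : Fin n) (π : Equiv.Perm (Fin n))
    (hπ : π ⟨k - 1, by omega⟩ = i) :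
    μ ({ω | σ ω = π} ∩ {ω | k ≤ stopT V τ σ ω} ∩ {ω | t < V i ω})
      = μ ({ω | σ ω = π} ∩ {ω | k ≤ stopT V τ σ ω}) * μ {ω | t < V i ω} := by
  classical
  set S : Fin n → Set ℝ := fun l =>
    if ((π.symm l : ℕ) + 1 < k) then Set.Iic (τ ((π.symm l : ℕ) + 1)) else Set.univ with hS
  set S' : Fin n → Set ℝ := fun l => if l = i then Set.Ioi t else S l with hS'
  have hSmeas : ∀ l, MeasurableSet (S l) := by
    intro l
    rw [hS]
    dsimp only
    split
    · exact measurableSet_Iic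
    · exact MeasurableSet.univ
  have hS'meas : ∀ l, MeasurableSet (S' l) := by
    intro l
    rw [hS']
    dsimp only
    split
    · exact measurableSet_Ioi
    · exact hSmeas l
  have hsymm : π.symm i = ⟨k - 1, by omega⟩ := by rw [← hπ, Equiv.symm_apply_apply]
  have hSi : S i = Set.univ := by
    rw [hS]
    dsimp only
    rw [hsymm, if_neg (by simp; omega)]
  have claim0 : ∀ ω : Ω, σ ω = π → (k ≤ stopT V τ σ ω ↔ ∀ l, V l ω ∈ S l) := by
    intro ω hσ
    rw [le_stopT_iff V τ σ (by omega) ω]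
    constructor
    · intro h l
      rw [hS]
      dsimp only
      split
      · next hcond =>
        have h2 := h (π.symm l) hcond
        rw [hσ, Equiv.apply_symm_apply] at h2
        exact h2
      · trivial
    · intro h m hm
      have h2 := h (π m)
      rw [hS] at h2
      dsimp only at h2
      rw [Equiv.symm_apply_apply, if_pos hm] at h2
      rw [hσ]
      exact h2
  have claim1 : {ω | σ ω = π} ∩ {ω | k ≤ stopT V τ σ ω}
      = {ω | σ ω = π} ∩ {ω | (fun l => V l ω) ∈ Set.univ.pi S} := by
    ext ω
    simp only [Set.mem_inter_iff, Set.mem_setOf_eq, Set.mem_univ_pi]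
    exact ⟨fun ⟨h1, h2⟩ => ⟨h1, (claim0 ω h1).mp h2⟩, fun ⟨h1, h2⟩ => ⟨h1, (claim0 ω h1).mpr h2⟩⟩
  have claim2 : {ω | σ ω = π} ∩ {ω | k ≤ stopT V τ σ ω} ∩ {ω | t < V i ω}
      = {ω | σ ω = π} ∩ {ω | (fun l => V l ω) ∈ Set.univ.pi S'} := by
    ext ω
    simp only [Set.mem_inter_iff, Set.mem_setOf_eq, Set.mem_univ_pi]
    constructor
    · rintro ⟨⟨h1, h2⟩, h3⟩
      refine ⟨h1, fun l => ?_⟩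
      rw [hS']
      dsimp only
      split
      · next hl => rw [hl]; exact h3
      · exact (claim0 ω h1).mp h2 l
    · rintro ⟨h1, h2⟩
      refine ⟨⟨h1, (claim0 ω h1).mpr fun l => ?_⟩, ?_⟩
      · by_cases hl : l = i
        · rw [hl, hSi]; trivial
        · have h3 := h2 l
          rw [hS'] at h3
          dsimp only at h3
          rw [if_neg hl] at h3
          exact h3
      · have h3 := h2 i
        rw [hS'] at h3
        dsimp only at h3
        rw [if_pos rfl] at h3
        exact h3
  have hprod : ∀ R : Fin n → Set ℝ, (∀ l, MeasurableSet (R l)) →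
      μ {ω | (fun l => V l ω) ∈ Set.univ.pi R} = ∏ l : Fin n, μ (V l ⁻¹' R l) := by
    intro R hR
    have hset : {ω | (fun l => V l ω) ∈ Set.univ.pi R} = ⋂ l ∈ Finset.univ, V l ⁻¹' R l := by
      ext ω
      simp [Set.mem_univ_pi]
    rw [hset, hVindep.measure_inter_preimage_eq_mul Finset.univ (fun l _ => hR l)]
  have hprodS' : ∏ l : Fin n, μ (V l ⁻¹' S' l)
      = μ {ω | t < V i ω} * ∏ l ∈ Finset.univ.erase i, μ (V l ⁻¹' S l) := by
    rw [← Finset.mul_prod_erase Finset.univ _ (Finset.mem_univ i)]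
    congr 1
    · congr 1
      rw [hS']
      dsimp only
      rw [if_pos rfl]
      rfl
    · refine Finset.prod_congr rfl fun l hl => ?_
      have hli : l ≠ i := Finset.ne_of_mem_erase hl
      congr 1
      rw [hS']
      dsimp only
      rw [if_neg hli]
  have hprodS : ∏ l : Fin n, μ (V l ⁻¹' S l)
      = ∏ l ∈ Finset.univ.erase i, μ (V l ⁻¹' S l) := by
    rw [← Finset.mul_prod_erase Finset.univ _ (Finset.mem_univ i), hSi]
    simp
  rw [claim2, claim1, hindep π _ (MeasurableSet.univ_pi hS'meas),
    hindep π _ (MeasurableSet.univ_pi hSmeas), hprod S' hS'meas, hprod S hSmeas,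
    hprodS', hprodS]
  ring

end Key

theorem stmt13 {Ω : Type*} [MeasurableSpace Ω] (μ : Measure Ω) [IsProbabilityMeasure μ]
    (n : ℕ) (hn : 0 < n) (V : Fin n → Ω → ℝ)
    (hVmeas : ∀ i, Measurable (V i))
    (hVnonneg : ∀ i ω, 0 ≤ V i ω)
    (hVindep : iIndepFun V μ)
    (σ : Ω → Equiv.Perm (Fin n))
    (hσmeas : ∀ π, MeasurableSet {ω | σ ω = π})
    (hσunif : ∀ π, μ {ω | σ ω = π} = ((n.factorial : ENNReal))⁻¹)
    (hindep : ∀ (π : Equiv.Perm (Fin n)) (A : Set (Fin n → ℝ)), MeasurableSet A →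
      μ ({ω | σ ω = π} ∩ {ω | (fun i => V i ω) ∈ A})
        = μ {ω | σ ω = π} * μ {ω | (fun i => V i ω) ∈ A})
    (τ : ℕ → ℝ)
    (hτ : ∀ k, 1 ≤ k → k < n → τ (k + 1) ≤ τ k)
    (j : ℕ) (hj1 : 1 ≤ j) (hjn : j ≤ n + 1)
    (t : ℝ)
    -- t ∈ [τ_j, τ_{j-1}), with the conventions τ₀ = ∞ and τ_{n+1} = -∞
    (ht1 : j ≤ n → τ j ≤ t) (ht2 : 2 ≤ j → t < τ (j - 1)) :
    (μ {ω | ∃ jj : Fin n, (jj : ℕ) + 1 = stopT V τ σ ω ∧ t < V (σ ω jj) ω}).toReal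
      = (μ {ω | stopT V τ σ ω ≤ j - 1}).toReal
        + ∑ i : Fin n, (μ {ω | t < V i ω}).toReal *
            ((1 / n : ℝ) * ∑ k ∈ Finset.Icc j n,
              (μ ({ω | k ≤ stopT V τ σ ω}
                    ∩ {ω | ∃ jj : Fin n, (jj : ℕ) + 1 = k ∧ σ ω jj = i})).toReal
                / (μ {ω | ∃ jj : Fin n, (jj : ℕ) + 1 = k ∧ σ ω jj = i}).toReal) := by
  classical
  have hmono := tau_mono τ hτ
  -- the divisor event, rewritten
  have hdiv : ∀ (k : ℕ) (hk1 : 1 ≤ k) (hkn : k ≤ n) (i : Fin n),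
      {ω | ∃ jj : Fin n, (jj : ℕ) + 1 = k ∧ σ ω jj = i}
        = {ω | σ ω ⟨k - 1, by omega⟩ = i} := by
    intro k hk1 hkn i
    ext ω
    simp only [Set.mem_setOf_eq]
    constructor
    · rintro ⟨jj, hjj, h⟩
      have : jj = (⟨k - 1, by omega⟩ : Fin n) := by
        apply Fin.ext
        show (jj : ℕ) = k - 1
        omega
      rw [← this]
      exact h
    · intro h
      exact ⟨⟨k - 1, by omega⟩, by show k - 1 + 1 = k; omega, h⟩
  -- value of the divisor
  have hDval : ∀ (k : ℕ), 1 ≤ k → k ≤ n → ∀ i : Fin n,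
      μ {ω | ∃ jj : Fin n, (jj : ℕ) + 1 = k ∧ σ ω jj = i} = (n : ENNReal)⁻¹ := by
    intro k hk1 hkn i
    rw [hdiv k hk1 hkn i]
    exact perm_marginal σ μ hn hσmeas hσunif _ i
  -- measurability of basic events
  have hTmeas : ∀ k : ℕ, k ≤ n + 1 → MeasurableSet {ω | k ≤ stopT V τ σ ω} :=
    fun k hk => measurable_ge_stopT V τ σ hVmeas hσmeas hk
  have hVtmeas : ∀ i : Fin n, MeasurableSet {ω | t < V i ω} := by
    intro i
    exact measurableSet_lt measurable_const (hVmeas i)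
  have hDmeas : ∀ (k : ℕ), 1 ≤ k → k ≤ n → ∀ i : Fin n,
      MeasurableSet {ω | ∃ jj : Fin n, (jj : ℕ) + 1 = k ∧ σ ω jj = i} := by
    intro k hk1 hkn i
    rw [hdiv k hk1 hkn i]
    exact measurable_perm_eq σ hσmeas _ i
  -- key factorization
  have hC : ∀ (k : ℕ), j ≤ k → k ≤ n → ∀ i : Fin n,
      μ (({ω | k ≤ stopT V τ σ ω} ∩ {ω | ∃ jj : Fin n, (jj : ℕ) + 1 = k ∧ σ ω jj = i})
          ∩ {ω | t < V i ω})
        = μ ({ω | k ≤ stopT V τ σ ω} ∩ {ω | ∃ jj : Fin n, (jj : ℕ) + 1 = k ∧ σ ω jj = i})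
            * μ {ω | t < V i ω} := by
    intro k hjk hkn i
    have hk1 : 1 ≤ k := le_trans hj1 hjk
    rw [hdiv k hk1 hkn i]
    have hXmeas : MeasurableSet ({ω | k ≤ stopT V τ σ ω} ∩ {ω | σ ω ⟨k - 1, by omega⟩ = i}
        ∩ {ω | t < V i ω}) :=
      ((hTmeas k (by omega)).inter (measurable_perm_eq σ hσmeas _ i)).inter (hVtmeas i)
    have hYmeas : MeasurableSet ({ω | k ≤ stopT V τ σ ω} ∩ {ω | σ ω ⟨k - 1, by omega⟩ = i}) :=
      (hTmeas k (by omega)).inter (measurable_perm_eq σ hσmeas _ i)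
    rw [sum_perm σ μ _ hXmeas hσmeas, sum_perm σ μ _ hYmeas hσmeas, Finset.sum_mul]
    refine Finset.sum_congr rfl fun π _ => ?_
    by_cases hπ : π ⟨k - 1, by omega⟩ = i
    · have e1 : {ω | σ ω = π} ∩ ({ω | k ≤ stopT V τ σ ω} ∩ {ω | σ ω ⟨k - 1, by omega⟩ = i}
          ∩ {ω | t < V i ω})
          = {ω | σ ω = π} ∩ {ω | k ≤ stopT V τ σ ω} ∩ {ω | t < V i ω} := by
        ext ω
        simp only [Set.mem_inter_iff, Set.mem_setOf_eq]
        constructor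
        · rintro ⟨h1, ⟨h2, _⟩, h3⟩
          exact ⟨⟨h1, h2⟩, h3⟩
        · rintro ⟨⟨h1, h2⟩, h3⟩
          exact ⟨h1, ⟨h2, by rw [h1]; exact hπ⟩, h3⟩
      have e2 : {ω | σ ω = π} ∩ ({ω | k ≤ stopT V τ σ ω} ∩ {ω | σ ω ⟨k - 1, by omega⟩ = i})
          = {ω | σ ω = π} ∩ {ω | k ≤ stopT V τ σ ω} := by
        ext ω
        simp only [Set.mem_inter_iff, Set.mem_setOf_eq]
        constructor
        · rintro ⟨h1, h2, _⟩
          exact ⟨h1, h2⟩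
        · rintro ⟨h1, h2⟩
          exact ⟨h1, h2, by rw [h1]; exact hπ⟩
      rw [e1, e2]
      exact key_indep V τ σ μ hVmeas hVindep hindep t hk1 hkn i π hπ
    · have e1 : {ω | σ ω = π} ∩ ({ω | k ≤ stopT V τ σ ω} ∩ {ω | σ ω ⟨k - 1, by omega⟩ = i}
          ∩ {ω | t < V i ω}) = ∅ := by
        ext ω
        simp only [Set.mem_inter_iff, Set.mem_setOf_eq, Set.mem_empty_iff_false, iff_false,
          not_and]
        rintro h1 ⟨_, h2⟩
        exact absurd (by rw [← h1]; exact h2) hπ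
      have e2 : {ω | σ ω = π} ∩ ({ω | k ≤ stopT V τ σ ω} ∩ {ω | σ ω ⟨k - 1, by omega⟩ = i})
          = ∅ := by
        ext ω
        simp only [Set.mem_inter_iff, Set.mem_setOf_eq, Set.mem_empty_iff_false, iff_false,
          not_and]
        rintro h1 _ h2
        exact absurd (by rw [← h1]; exact h2) hπ
      rw [e1, e2, measure_empty, zero_mul]
  -- the decomposition of the main event
  set A : Set Ω := {ω | stopT V τ σ ω ≤ j - 1} with hA
  set B : ℕ → Set Ω :=
    fun k => {ω | k ≤ stopT V τ σ ω ∧ ∃ jj : Fin n, (jj : ℕ) + 1 = k ∧ t < V (σ ω jj) ω}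
    with hB
  have hBstop : ∀ k, j ≤ k → k ≤ n → ∀ ω ∈ B k, stopT V τ σ ω = k := by
    intro k hjk hkn ω hω
    obtain ⟨hle, jj, hjj, htlt⟩ := hω
    have hτk : τ k ≤ t := le_trans (hmono j k hj1 hjk hkn) (ht1 (le_trans hjk hkn))
    have h2 : stopT V τ σ ω ≤ k := Nat.sInf_le (Or.inl ⟨jj, hjj, lt_of_le_of_lt hτk htlt⟩)
    omega
  have hEdecomp : {ω | ∃ jj : Fin n, (jj : ℕ) + 1 = stopT V τ σ ω ∧ t < V (σ ω jj) ω}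
      = A ∪ ⋃ k ∈ Finset.Icc j n, B k := by
    ext ω
    simp only [Set.mem_setOf_eq, Set.mem_union, Set.mem_iUnion, Finset.mem_Icc, exists_prop]
    constructor
    · rintro ⟨jj, hjj, htlt⟩
      by_cases hcase : stopT V τ σ ω ≤ j - 1
      · exact Or.inl hcase
      · have hjlt : (jj : ℕ) < n := jj.isLt
        refine Or.inr ⟨stopT V τ σ ω, ⟨by omega, by omega⟩, le_refl _, jj, hjj, htlt⟩
    · rintro (hA' | ⟨k, ⟨hjk, hkn⟩, hBk⟩)
      · have h1 := one_le_stopT V τ σ ω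
        have hA'' : stopT V τ σ ω ≤ j - 1 := hA'
        have hj2 : 2 ≤ j := by omega
        have hkn' : stopT V τ σ ω ≤ n := by omega
        obtain ⟨m, hm, hlt⟩ := stopT_spec V τ σ ω rfl hkn'
        refine ⟨m, hm, lt_of_lt_of_le (ht2 hj2) (le_trans ?_ (le_of_lt hlt))⟩
        exact hmono (stopT V τ σ ω) (j - 1) h1 (by omega) (by omega)
      · have hTk := hBstop k hjk hkn ω hBk
        obtain ⟨_, jj, hjj, htlt⟩ := hBk
        exact ⟨jj, by omega, htlt⟩
  -- B k as a disjoint union over i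
  have hBunion : ∀ (k : ℕ) (hjk : j ≤ k) (hkn : k ≤ n), B k
      = ⋃ i ∈ (Finset.univ : Finset (Fin n)),
          (({ω | k ≤ stopT V τ σ ω} ∩ {ω | ∃ jj : Fin n, (jj : ℕ) + 1 = k ∧ σ ω jj = i})
            ∩ {ω | t < V i ω}) := by
    intro k hjk hkn
    ext ω
    simp only [hB, Set.mem_setOf_eq, Set.mem_iUnion, Finset.mem_univ, Set.mem_inter_iff,
      exists_prop, true_and]
    constructor
    · rintro ⟨hle, jj, hjj, htlt⟩
      exact ⟨σ ω jj, ⟨hle, jj, hjj, rfl⟩, htlt⟩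
    · rintro ⟨i, ⟨hle, jj, hjj, hji⟩, htlt⟩
      exact ⟨hle, jj, hjj, by rw [hji]; exact htlt⟩
  have hBmeas : ∀ k ∈ Finset.Icc j n, MeasurableSet (B k) := by
    intro k hk
    rw [Finset.mem_Icc] at hk
    rw [hBunion k hk.1 hk.2]
    refine Finset.measurableSet_biUnion _ fun i _ => ?_
    exact ((hTmeas k (by omega)).inter (hDmeas k (by omega) hk.2 i)).inter (hVtmeas i)
  have hdisjAB : Disjoint A (⋃ k ∈ Finset.Icc j n, B k) := by
    rw [Set.disjoint_left]
    rintro ω hωA hωB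
    simp only [Set.mem_iUnion, Finset.mem_Icc, exists_prop] at hωB
    obtain ⟨k, ⟨hjk, hkn⟩, hBk⟩ := hωB
    have h1 := hBstop k hjk hkn ω hBk
    have hωA' : stopT V τ σ ω ≤ j - 1 := hωA
    omega
  have hBdisj : (↑(Finset.Icc j n) : Set ℕ).PairwiseDisjoint B := by
    intro k hk k' hk' hne
    simp only [Finset.coe_Icc, Set.mem_Icc] at hk hk'
    refine Set.disjoint_left.mpr fun ω h1 h2 => ?_
    have e1 := hBstop k hk.1 hk.2 ω h1
    have e2 := hBstop k' hk'.1 hk'.2 ω h2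
    exact hne (by omega)
  have hEmeasure : μ {ω | ∃ jj : Fin n, (jj : ℕ) + 1 = stopT V τ σ ω ∧ t < V (σ ω jj) ω}
      = μ A + ∑ k ∈ Finset.Icc j n, μ (B k) := by
    rw [hEdecomp, measure_union hdisjAB (Finset.measurableSet_biUnion _ hBmeas),
      measure_biUnion_finset hBdisj hBmeas]
  have hBval : ∀ (k : ℕ) (hjk : j ≤ k) (hkn : k ≤ n),
      μ (B k) = ∑ i : Fin n,
        μ ({ω | k ≤ stopT V τ σ ω} ∩ {ω | ∃ jj : Fin n, (jj : ℕ) + 1 = k ∧ σ ω jj = i})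
          * μ {ω | t < V i ω} := by
    intro k hjk hkn
    rw [hBunion k hjk hkn, measure_biUnion_finset ?_ ?_]
    · exact Finset.sum_congr rfl fun i _ => hC k hjk hkn i
    · intro a _ b _ hab
      refine Set.disjoint_left.mpr ?_
      rintro ω ⟨⟨-, jj, hjj, hja⟩, -⟩ ⟨⟨-, jj', hjj', hjb⟩, -⟩
      have hjjeq : jj = jj' := Fin.ext (by omega)
      exact hab (by rw [← hja, ← hjb, hjjeq])
    · intro i _
      exact ((hTmeas k (by omega)).inter (hDmeas k (by omega) hkn i)).inter (hVtmeas i)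
  -- put everything together
  have hL : ∑ k ∈ Finset.Icc j n, (μ (B k)).toReal
      = ∑ k ∈ Finset.Icc j n, ∑ i : Fin n,
          (μ ({ω | k ≤ stopT V τ σ ω}
              ∩ {ω | ∃ jj : Fin n, (jj : ℕ) + 1 = k ∧ σ ω jj = i})).toReal
            * (μ {ω | t < V i ω}).toReal := by
    refine Finset.sum_congr rfl fun k hk => ?_
    rw [Finset.mem_Icc] at hk
    rw [hBval k hk.1 hk.2,
      ENNReal.toReal_sum fun i _ => ENNReal.mul_ne_top (measure_ne_top μ _) (measure_ne_top μ _)]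
    exact Finset.sum_congr rfl fun i _ => ENNReal.toReal_mul
  have hinner : ∀ i : Fin n,
      (1 / n : ℝ) * ∑ k ∈ Finset.Icc j n,
          (μ ({ω | k ≤ stopT V τ σ ω}
                ∩ {ω | ∃ jj : Fin n, (jj : ℕ) + 1 = k ∧ σ ω jj = i})).toReal
            / (μ {ω | ∃ jj : Fin n, (jj : ℕ) + 1 = k ∧ σ ω jj = i}).toReal
        = ∑ k ∈ Finset.Icc j n,
            (μ ({ω | k ≤ stopT V τ σ ω}
                ∩ {ω | ∃ jj : Fin n, (jj : ℕ) + 1 = k ∧ σ ω jj = i})).toReal := by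
    intro i
    rw [Finset.mul_sum]
    refine Finset.sum_congr rfl fun k hk => ?_
    rw [Finset.mem_Icc] at hk
    rw [hDval k (by omega) hk.2 i, ENNReal.toReal_inv, ENNReal.toReal_natCast]
    have hn0 : (n : ℝ) ≠ 0 := Nat.cast_ne_zero.mpr (by omega)
    field_simp
  rw [hEmeasure, ENNReal.toReal_add (measure_ne_top μ A)
      (ENNReal.sum_ne_top.mpr fun k _ => measure_ne_top μ _),
    ENNReal.toReal_sum fun k _ => measure_ne_top μ _, hL, Finset.sum_comm]
  congr 1
  refine Finset.sum_congr rfl fun i _ => ?_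
  rw [hinner i, Finset.mul_sum]
  exact Finset.sum_congr rfl fun k _ => mul_comm _ _
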